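/- For every nonnegative integer n, cφ₂(2n) ≡ p(n) (mod 4) and cφ₂(2n+1) ≡ 0 (mod 4), where p denotes the ordinary partition function. -/

import Mathlib

/-- `pk k n` is the `n`-th coefficient of `∏_{m ≥ 1} (1 - q^m)^{-k}` (the factors with
`m > n` do not affect the `n`-th coefficient, so a finite product suffices). -/
noncomputable def pk (k n : ℕ) : ℤ :=
  PowerSeries.coeff (R := ℤ) n
    (∏ m ∈ Finset.range (n + 1),
      ((1 - (PowerSeries.X : PowerSeries ℤ) ^ (m + 1)).invOfUnit 1) ^ k)

/-- The quadratic form `Q(m₁,…,m_{k-1}) = ∑ mᵢ² + ∑_{i<j} mᵢ mⱼ`. -/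
def Qform (k : ℕ) (m : Fin (k - 1) → ℤ) : ℤ :=
  (∑ i, (m i) ^ 2) + ∑ i, ∑ j ∈ Finset.univ.filter (fun j => i < j), m i * m j

/-- `rQ k j` is the number of `m ∈ ℤ^{k-1}` with `Q(m) = j`. -/
noncomputable def rQ (k j : ℕ) : ℕ :=
  {m : Fin (k - 1) → ℤ | Qform k m = (j : ℤ)}.ncard

/-- Andrews' generalized Frobenius partition function `cφ_k(n) = ∑_{j=0}^n r_Q(j) p_k(n-j)`. -/
noncomputable def cphi (k n : ℕ) : ℤ :=
  ∑ j ∈ Finset.range (n + 1), (rQ k j : ℤ) * pk k (n - j)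

namespace CPhiAux

noncomputable section

open PowerSeries Finset
open scoped Classical

variable {R : Type*}

/-- Power series whose coefficients indicate a subset. -/
def indicatorSeries (R : Type*) [Semiring R] (s : Set ℕ) : PowerSeries R :=
  PowerSeries.mk fun n => if n ∈ s then 1 else 0

theorem coeff_indicator (s : Set ℕ) [Semiring R] (n : ℕ) :
    coeff (R := R) n (indicatorSeries _ s) = if n ∈ s then 1 else 0 :=
  coeff_mk _ _

/-- The inverse of `1 - X^k` as an explicit indicator series. -/
def ind (R : Type*) [Semiring R] (k : ℕ) : PowerSeries R :=
  indicatorSeries R {j | k ∣ j}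

theorem coeff_ind [Semiring R] (k n : ℕ) :
    coeff (R := R) n (ind R k) = if k ∣ n then 1 else 0 := by
  rw [ind, coeff_indicator]
  simp only [Set.mem_setOf_eq]

theorem one_sub_mul_ind [CommRing R] {k : ℕ} (hk : 0 < k) :
    (1 - X ^ k) * ind R k = 1 := by
  ext n
  rw [sub_mul, one_mul, map_sub, coeff_X_pow_mul' (ind R k) k n, coeff_ind, coeff_one]
  by_cases h0 : n = 0
  · subst h0
    rw [if_pos (dvd_zero k), if_neg (by omega), if_pos rfl]; ring
  · have hiff : k ∣ n ↔ k ≤ n ∧ k ∣ n - k := by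
      constructor
      · intro hd; exact ⟨Nat.le_of_dvd (Nat.pos_of_ne_zero h0) hd, Nat.dvd_sub hd dvd_rfl⟩
      · rintro ⟨hle, hd⟩
        have h : n - k + k = n := Nat.sub_add_cancel hle
        exact h ▸ Nat.dvd_add hd dvd_rfl
    rw [coeff_ind]
    split_ifs with h1 h2 h3 h2 <;> simp_all

/-- Uniqueness of inverses. -/
theorem inv_unique' [CommMonoid R] {a b c : R} (hab : a * b = 1) (hac : a * c = 1) : b = c := by
  calc b = b * (a * c) := by rw [hac, mul_one]
  _ = (a * b) * c := by rw [← mul_assoc, mul_comm b a]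
  _ = c := by rw [hab, one_mul]

theorem invOfUnit_eq_ind [CommRing R] (i : ℕ) :
    ((1 - X ^ (i + 1) : PowerSeries R).invOfUnit 1) = ind R (i + 1) := by
  have h1 : (1 - X ^ (i + 1) : PowerSeries R) * ((1 - X ^ (i + 1) : PowerSeries R).invOfUnit 1) = 1 := by
    apply mul_invOfUnit
    simp
  exact inv_unique' h1 (one_sub_mul_ind (Nat.succ_pos i))

-- chunk 2 (appended inside namespace CPhiAux, section)

/-- `f` agrees with `1` in coefficients `0,…,s`. -/
def OneUpto [Semiring R] (s : ℕ) (f : PowerSeries R) : Prop :=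
  coeff (R := R) 0 f = 1 ∧ ∀ j, 0 < j → j ≤ s → coeff (R := R) j f = 0

theorem oneUpto_one [Semiring R] (s : ℕ) : OneUpto s (1 : PowerSeries R) :=
  ⟨by simp, fun j hj _ => by rw [coeff_one, if_neg (by omega)]⟩

theorem ind_oneUpto [Semiring R] {k s : ℕ} (h : s < k) (hk : 0 < k) : OneUpto s (ind R k) := by
  refine ⟨by simp [coeff_ind], fun j hj hjs => ?_⟩
  rw [coeff_ind, if_neg (fun hd => absurd (Nat.le_of_dvd hj hd) (by omega))]

theorem coeff_mul_oneUpto [Semiring R] {s : ℕ} {f g : PowerSeries R} (hf : OneUpto s f) :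
    coeff (R := R) s (f * g) = coeff (R := R) s g := by
  rw [coeff_mul]
  rw [Finset.sum_eq_single (0, s)]
  · simp [hf.1]
  · rintro ⟨a, b⟩ hab hne
    rw [Finset.HasAntidiagonal.mem_antidiagonal] at hab
    have ha : 0 < a := by
      rcases Nat.eq_zero_or_pos a with rfl | h
      · exact absurd (by simp [← hab]) hne
      · exact h
    rw [hf.2 a ha (by omega), zero_mul]
  · intro h
    exact absurd (by simp) h

theorem OneUpto.mul [Semiring R] {s : ℕ} {f g : PowerSeries R} (hf : OneUpto s f)
    (hg : OneUpto s g) : OneUpto s (f * g) := by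
  refine ⟨?_, fun j hj hjs => ?_⟩
  · simp [coeff_mul, Finset.Nat.antidiagonal_zero, hf.1, hg.1]
  · rw [coeff_mul]
    apply Finset.sum_eq_zero
    rintro ⟨a, b⟩ hab
    rw [Finset.HasAntidiagonal.mem_antidiagonal] at hab
    rcases Nat.eq_zero_or_pos a with rfl | ha
    · rw [hg.2 b (by omega) (by omega), mul_zero]
    · rw [hf.2 a ha (by omega), zero_mul]

theorem OneUpto.prod [CommSemiring R] {s : ℕ} {ι : Type*} (t : Finset ι)
    (F : ι → PowerSeries R) (h : ∀ i ∈ t, OneUpto s (F i)) :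
    OneUpto s (∏ i ∈ t, F i) := by
  classical
  induction t using Finset.induction_on with
  | empty => simpa using oneUpto_one s
  | insert _ _ hx ih =>
    rw [Finset.prod_insert hx]
    exact (h _ (Finset.mem_insert_self _ _)).mul
      (ih fun i hi => h i (Finset.mem_insert_of_mem hi))

theorem OneUpto.pow [CommSemiring R] {s : ℕ} {f : PowerSeries R} (hf : OneUpto s f) (k : ℕ) :
    OneUpto s (f ^ k) := by
  induction k with
  | zero => simpa using oneUpto_one s
  | succ k ih => rw [pow_succ]; exact ih.mul hf

-- chunk 3: structural identities and divisor parity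

theorem ind_eq_ind_two_mul [CommRing R] {k : ℕ} (hk : 0 < k) :
    ind R k = ind R (2 * k) * (1 + X ^ k) := by
  refine inv_unique' (one_sub_mul_ind hk) ?_
  have h : ((1 - X ^ k) * (ind R (2 * k) * (1 + X ^ k)) : PowerSeries R)
      = (1 - X ^ (2 * k)) * ind R (2 * k) := by
    have hX : (X : PowerSeries R) ^ (2 * k) = (X ^ k) ^ 2 := by
      rw [← pow_mul, mul_comm]
    rw [hX]; ring
  rw [h, one_sub_mul_ind (by omega)]

theorem sq_one_add_mul_ind [CommRing R] {k : ℕ} (hk : 0 < k) :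
    (1 + X ^ k) ^ 2 * ind R (2 * k) = 1 + 2 * (ind R k * X ^ k) := by
  calc (1 + X ^ k) ^ 2 * ind R (2 * k)
      = (1 + X ^ k) * (ind R (2 * k) * (1 + X ^ k)) := by ring
    _ = (1 + X ^ k) * ind R k := by rw [← ind_eq_ind_two_mul hk]
    _ = (1 - X ^ k) * ind R k + 2 * (ind R k * X ^ k) := by ring
    _ = 1 + 2 * (ind R k * X ^ k) := by rw [one_sub_mul_ind hk]

theorem prod_one_add_two_mul {S : Type*} [CommRing S] (h : (2 : S) * 2 = 0)
    {ι : Type*} (t : Finset ι) (a : ι → S) :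
    ∏ i ∈ t, (1 + 2 * a i) = 1 + 2 * ∑ i ∈ t, a i := by
  classical
  induction t using Finset.induction_on with
  | empty => simp
  | @insert x t hx ih =>
    rw [Finset.prod_insert hx, ih, Finset.sum_insert hx]
    linear_combination (a x * ∑ i ∈ t, a i) * h

theorem even_indicator_add_card_divisors {j : ℕ} (hj : j ≠ 0) :
    Even ((if IsSquare j then 1 else 0) + j.divisors.card) := by
  classical
  have cast_sum : ∀ (t : Finset ℕ), ((t.card : ZMod 2)) = ∑ _x ∈ t, (1 : ZMod 2) := by
    intro t; simp
  by_cases hsq : IsSquare j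
  · obtain ⟨r, hr⟩ := hsq
    have hrd : r ∈ j.divisors := Nat.mem_divisors.mpr ⟨Dvd.intro r hr.symm, hj⟩
    have hr0 : r ≠ 0 := by rintro rfl; simp at hr; exact hj hr
    -- sum over divisors \ {r} vanishes
    have hzero : ∑ _x ∈ j.divisors.erase r, (1 : ZMod 2) = 0 := by
      apply Finset.sum_involution (fun d _ => j / d)
      · intro a _; decide
      · intro a ha _ heq
        have haj : a ∣ j := (Nat.mem_divisors.mp (Finset.mem_of_mem_erase ha)).1
        have : j = a * a := by rw [← Nat.div_mul_cancel haj, heq]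
        have har : a ≠ r := Finset.ne_of_mem_erase ha
        apply har
        have : a * a = r * r := by rw [← this, hr]
        exact Nat.mul_self_inj.mp this
      · intro a ha
        have haj : a ∣ j := (Nat.mem_divisors.mp (Finset.mem_of_mem_erase ha)).1
        refine Finset.mem_erase.mpr ⟨?_, Nat.mem_divisors.mpr ⟨Nat.div_dvd_of_dvd haj, hj⟩⟩
        intro heq
        apply Finset.ne_of_mem_erase ha
        have : j / (j / a) = a := Nat.div_div_self haj hj
        rw [heq] at this
        rw [← this, hr, Nat.mul_div_cancel_left r (Nat.pos_of_ne_zero hr0)]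
      · intro a ha
        exact Nat.div_div_self (Nat.mem_divisors.mp (Finset.mem_of_mem_erase ha)).1 hj
    have hcast : ((j.divisors.card : ZMod 2)) = 1 := by
      rw [cast_sum, ← Finset.add_sum_erase _ _ hrd, hzero, add_zero]
    -- conclude Odd card
    have hodd : Odd j.divisors.card := by
      rcases Nat.even_or_odd j.divisors.card with he | ho
      · exfalso
        obtain ⟨c, hc⟩ := he
        rw [hc] at hcast
        push_cast at hcast
        have h2 : ((c : ZMod 2) + c) = 0 := by
          have h : ((c : ZMod 2)) + c = 2 * c := by ring
          rw [h, show ((2 : ZMod 2)) = 0 from by decide, zero_mul]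
        rw [h2] at hcast
        exact one_ne_zero hcast.symm
      · exact ho
    rw [if_pos ⟨r, hr⟩]
    obtain ⟨c, hc⟩ := hodd
    exact ⟨c + 1, by omega⟩
  · have hzero : ∑ _x ∈ j.divisors, (1 : ZMod 2) = 0 := by
      apply Finset.sum_involution (fun d _ => j / d)
      · intro a _; decide
      · intro a ha _ heq
        have haj : a ∣ j := (Nat.mem_divisors.mp ha).1
        exact hsq ⟨a, by rw [← Nat.div_mul_cancel haj, heq]⟩
      · intro a ha
        exact Nat.mem_divisors.mpr ⟨Nat.div_dvd_of_dvd (Nat.mem_divisors.mp ha).1, hj⟩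
      · intro a ha
        exact Nat.div_div_self (Nat.mem_divisors.mp ha).1 hj
    have hcast : ((j.divisors.card : ZMod 2)) = 0 := by rw [cast_sum, hzero]
    have hdvd : (2:ℕ) ∣ j.divisors.card :=
      (ZMod.natCast_eq_zero_iff _ 2).mp hcast
    rw [if_neg hsq, zero_add]
    exact even_iff_two_dvd.mpr hdvd

-- chunk 4: pk cast and rQ computation

theorem map_ind {R S : Type*} [CommRing R] [CommRing S] (f : R →+* S) (k : ℕ) :
    PowerSeries.map f (ind R k) = ind S k := by
  ext n
  rw [PowerSeries.coeff_map, coeff_ind, coeff_ind, apply_ite f, map_one, map_zero]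

theorem coeff_prod_ind_sq_ext {R : Type*} [CommRing R] {s B : ℕ} (h : s + 1 ≤ B) :
    coeff (R := R) s (∏ m ∈ range B, (ind R (m + 1)) ^ 2) =
      coeff (R := R) s (∏ m ∈ range (s + 1), (ind R (m + 1)) ^ 2) := by
  rw [← Finset.prod_range_mul_prod_Ico _ h, mul_comm]
  apply coeff_mul_oneUpto
  apply OneUpto.prod
  intro m hm
  rw [Finset.mem_Ico] at hm
  exact (ind_oneUpto (by omega) (by omega)).pow 2

theorem pk_two_cast {s B : ℕ} (h : s + 1 ≤ B) :
    ((pk 2 s : ℤ) : ZMod 4) = coeff (R := (ZMod 4)) s (∏ m ∈ range B, (ind (ZMod 4) (m + 1)) ^ 2) := by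
  rw [coeff_prod_ind_sq_ext h, pk]
  simp_rw [invOfUnit_eq_ind]
  have hcast : ((PowerSeries.coeff (R := ℤ) s (∏ m ∈ range (s+1), (ind ℤ (m+1))^2) : ℤ) : ZMod 4)
      = (Int.castRingHom (ZMod 4)) (PowerSeries.coeff (R := ℤ) s (∏ m ∈ range (s+1), (ind ℤ (m+1))^2)) :=
    rfl
  rw [hcast, ← PowerSeries.coeff_map]
  congr 1
  rw [map_prod]
  apply Finset.prod_congr rfl
  intro m _
  rw [map_pow, map_ind]

theorem Qform_two (m : Fin 1 → ℤ) : Qform 2 m = m 0 ^ 2 := by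
  have h2 : (Finset.univ.filter (fun j => (0 : Fin 1) < j)) = ∅ := by
    rw [Finset.filter_eq_empty_iff]
    intro j _
    simp [Subsingleton.elim (0 : Fin 1) j]
  rw [Qform, Fin.sum_univ_one, Fin.sum_univ_one, h2, Finset.sum_empty, add_zero]

theorem rQ_two (j : ℕ) : rQ 2 j = if j = 0 then 1 else if IsSquare j then 2 else 0 := by
  have hset : {m : Fin 1 → ℤ | Qform 2 m = (j : ℤ)} =
      (fun y : ℤ => (fun _ : Fin 1 => y)) '' {y : ℤ | y ^ 2 = (j : ℤ)} := by
    ext m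
    simp only [Set.mem_setOf_eq, Set.mem_image, Qform_two]
    constructor
    · intro hm
      exact ⟨m 0, hm, by funext i; rw [Subsingleton.elim i 0]⟩
    · rintro ⟨y, hy, rfl⟩
      exact hy
  have hinj : Function.Injective (fun y : ℤ => (fun _ : Fin 1 => y)) := by
    intro a b hab
    exact congrFun hab 0
  rw [rQ, hset, Set.ncard_image_of_injective _ hinj]
  by_cases h0 : j = 0
  · subst h0
    rw [if_pos rfl]
    have : {y : ℤ | y ^ 2 = ((0:ℕ) : ℤ)} = {0} := by
      ext y; simp [pow_eq_zero_iff]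
    rw [this, Set.ncard_singleton]
  · rw [if_neg h0]
    by_cases hsq : IsSquare j
    · rw [if_pos hsq]
      obtain ⟨r, hr⟩ := hsq
      have hr0 : r ≠ 0 := by rintro rfl; simp at hr; exact h0 hr
      have : {y : ℤ | y ^ 2 = (j : ℤ)} = {(r : ℤ), -(r : ℤ)} := by
        ext y
        simp only [Set.mem_setOf_eq, Set.mem_insert_iff, Set.mem_singleton_iff]
        rw [show ((j:ℤ)) = (r:ℤ)^2 by rw [hr]; push_cast; ring]
        exact sq_eq_sq_iff_eq_or_eq_neg
      rw [this, Set.ncard_pair (by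
        intro hcontra
        have : (r:ℤ) = 0 := by omega
        exact hr0 (by exact_mod_cast this))]
    · rw [if_neg hsq]
      have : {y : ℤ | y ^ 2 = (j : ℤ)} = ∅ := by
        ext y
        simp only [Set.mem_setOf_eq, Set.mem_empty_iff_false, iff_false]
        intro hy
        apply hsq
        refine ⟨y.natAbs, ?_⟩
        have h1 : ((y.natAbs * y.natAbs : ℕ) : ℤ) = (j : ℤ) := by
          rw [Int.natAbs_mul_self, ← sq, hy]
        exact_mod_cast h1.symm
      rw [this, Set.ncard_empty]

-- chunk 5: partition generating function (partialGF_prop copied from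
-- Archive/Wiedijk100Theorems/Partition.lean) and partition counting

universe u
variable {ι : Type u}

-- The main workhorse of the partition theorem proof.
theorem partialGF_prop (α : Type*) [CommSemiring α] (n : ℕ) (s : Finset ℕ) (hs : ∀ i ∈ s, 0 < i)
    (c : ℕ → Set ℕ) (hc : ∀ i, i ∉ s → 0 ∈ c i) :
    #{p : n.Partition | (∀ j, p.parts.count j ∈ c j) ∧ ∀ j ∈ p.parts, j ∈ s} =
      coeff (R := α) n (∏ i ∈ s, indicatorSeries α ((· * i) '' c i)) := by
  simp_rw [coeff_prod, coeff_indicator, prod_boole, sum_boole]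
  apply congr_arg
  simp only [mem_univ, forall_true_left, not_and, not_forall, exists_prop,
    Set.mem_image, not_exists]
  set φ : (a : Nat.Partition n) →
    a ∈ filter (fun p ↦ (∀ (j : ℕ), Multiset.count j p.parts ∈ c j) ∧ ∀ j ∈ p.parts, j ∈ s) univ →
    ℕ →₀ ℕ := fun p _ => {
      toFun := fun i => Multiset.count i p.parts • i
      support := Finset.filter (fun i => i ≠ 0) p.parts.toFinset
      mem_support_toFun := fun a => by
        simp only [smul_eq_mul, ne_eq, mul_eq_zero, Multiset.count_eq_zero]
        rw [not_or, not_not]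
        simp only [Multiset.mem_toFinset, not_not, mem_filter] }
  refine Finset.card_bij φ ?_ ?_ ?_
  · intro a ha
    simp only [φ, not_forall, not_exists, not_and, exists_prop, mem_filter]
    rw [mem_finsuppAntidiag]
    dsimp only [ne_eq, smul_eq_mul, id_eq, eq_mpr_eq_cast, le_eq_subset, Finsupp.coe_mk]
    simp only [mem_univ, forall_true_left, not_and, not_forall, exists_prop,
      mem_filter, true_and] at ha
    refine ⟨⟨?_, fun i ↦ ?_⟩, fun i _ ↦ ⟨a.parts.count i, ha.1 i, rfl⟩⟩
    · conv_rhs => simp [← a.parts_sum]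
      rw [sum_multiset_count_of_subset _ s]
      · simp only [smul_eq_mul]
      · intro i
        simp only [Multiset.mem_toFinset, not_not, mem_filter]
        apply ha.2
    · simp only [ne_eq, Multiset.mem_toFinset, not_not, mem_filter, and_imp]
      exact fun hi _ ↦ ha.2 i hi
  · intro p₁ hp₁ p₂ hp₂ h
    apply Nat.Partition.ext
    simp only [true_and, mem_univ, mem_filter] at hp₁ hp₂
    ext i
    simp only [φ, ne_eq, Multiset.mem_toFinset, not_not, smul_eq_mul, Finsupp.mk.injEq] at h
    by_cases hi : i = 0
    · rw [hi]
      rw [Multiset.count_eq_zero_of_notMem]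
      · rw [Multiset.count_eq_zero_of_notMem]
        intro a; exact Nat.lt_irrefl 0 (hs 0 (hp₂.2 0 a))
      intro a; exact Nat.lt_irrefl 0 (hs 0 (hp₁.2 0 a))
    · rw [← mul_left_inj' hi]
      rw [funext_iff] at h
      exact h.2 i
  · simp only [φ, mem_filter, mem_finsuppAntidiag, mem_univ, exists_prop, true_and, and_assoc]
    rintro f ⟨hf, hf₃, hf₄⟩
    have hf' : f ∈ finsuppAntidiag s n := mem_finsuppAntidiag.mpr ⟨hf, hf₃⟩
    simp only [mem_finsuppAntidiag] at hf'
    refine ⟨⟨∑ i ∈ s, Multiset.replicate (f i / i) i, ?_, ?_⟩, ?_, ?_, ?_⟩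
    · intro i hi
      simp only [exists_prop, Multiset.mem_sum, mem_map, Function.Embedding.coeFn_mk] at hi
      rcases hi with ⟨t, ht, z⟩
      apply hs
      rwa [Multiset.eq_of_mem_replicate z]
    · simp_rw [Multiset.sum_sum, Multiset.sum_replicate, Nat.nsmul_eq_mul]
      rw [← hf'.1]
      refine sum_congr rfl fun i hi => Nat.div_mul_cancel ?_
      rcases hf₄ i hi with ⟨w, _, hw₂⟩
      rw [← hw₂]
      exact dvd_mul_left _ _
    · intro i
      simp_rw [Multiset.count_sum', Multiset.count_replicate, sum_ite_eq']
      split_ifs with h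
      · rcases hf₄ i h with ⟨w, hw₁, hw₂⟩
        rwa [← hw₂, Nat.mul_div_cancel _ (hs i h)]
      · exact hc _ h
    · intro i hi
      rw [Multiset.mem_sum] at hi
      rcases hi with ⟨j, hj₁, hj₂⟩
      rwa [Multiset.eq_of_mem_replicate hj₂]
    · ext i
      simp_rw [Multiset.count_sum', Multiset.count_replicate, sum_ite_eq']
      simp only [ne_eq, Multiset.mem_toFinset, not_not, smul_eq_mul, ite_mul,
        zero_mul, Finsupp.coe_mk]
      split_ifs with h
      · apply Nat.div_mul_cancel
        rcases hf₄ i h with ⟨w, _, hw₂⟩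
        apply Dvd.intro_left _ hw₂
      · apply symm
        rw [← Finsupp.notMem_support_iff]
        exact notMem_mono hf'.2 h


theorem indicator_image_univ [Semiring R] (i : ℕ) :
    indicatorSeries R ((· * i) '' Set.univ) = ind R i := by
  have hset : ((· * i) '' Set.univ : Set ℕ) = {j | i ∣ j} := by
    ext k
    constructor
    · rintro ⟨c, -, rfl⟩; exact Dvd.intro_left c rfl
    · rintro ⟨c, rfl⟩; exact ⟨c, Set.mem_univ c, mul_comm c i⟩
  rw [hset]
  rfl

/-- The doubling embedding `m ↦ 2 * (m + 1)`. -/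
def mkEven : ℕ ↪ ℕ := ⟨fun m => 2 * (m + 1), fun x y h => by simpa using h⟩

theorem mkEven_apply (m : ℕ) : mkEven m = 2 * (m + 1) := rfl

theorem coeff_P2_eq_card [CommSemiring R] (t B : ℕ) (ht : t ≤ 2 * B) :
    (coeff (R := R) t (∏ m ∈ range B, ind R (2 * (m + 1))) : R) =
      #{p : t.Partition | ∀ j ∈ p.parts, Even j} := by
  have h := partialGF_prop R t ((range B).map mkEven)
    (fun i hi => by
      rw [Finset.mem_map] at hi
      obtain ⟨a, -, ha⟩ := hi
      simp only [mkEven_apply, Function.Embedding.coeFn_mk] at ha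
      omega)
    (fun _ => Set.univ) (fun _ _ => trivial)
  rw [Finset.prod_map] at h
  simp only [Function.Embedding.coeFn_mk, mkEven_apply] at h
  simp_rw [indicator_image_univ] at h
  rw [← h]
  congr 1
  apply congr_arg Finset.card
  apply Finset.filter_congr
  intro p _
  simp only [Set.mem_univ, forall_const, true_and]
  apply forall₂_congr
  intro j hj
  have hj1 : 0 < j := p.parts_pos hj
  have hjt : j ≤ t := by
    simpa [p.parts_sum] using Multiset.single_le_sum (fun _ _ => Nat.zero_le _) _ hj
  simp only [mem_map, mem_range, Function.Embedding.coeFn_mk, mkEven_apply]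
  constructor
  · rintro ⟨m, -, rfl⟩; exact ⟨m + 1, by ring⟩
  · rintro ⟨r, rfl⟩
    refine ⟨r - 1, by omega, by omega⟩

theorem card_even_partitions_odd [CommSemiring R] (N : ℕ) (hN : ¬ (2 ∣ N)) :
    (#{p : N.Partition | ∀ j ∈ p.parts, Even j} : R) = 0 := by
  rw [Finset.filter_eq_empty_iff.mpr, Finset.card_empty, Nat.cast_zero]
  intro p _
  intro hall
  apply hN
  have : (2:ℕ) ∣ p.parts.sum := Multiset.dvd_sum (fun x hx => even_iff_two_dvd.mp (hall x hx))
  rwa [p.parts_sum] at this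

theorem card_even_partitions_even (n : ℕ) :
    #{p : (2 * n).Partition | ∀ j ∈ p.parts, Even j} = Fintype.card (Nat.Partition n) := by
  classical
  rw [Fintype.card]
  symm
  refine Finset.card_bij'
    (fun (p : Nat.Partition n) (_ : p ∈ Finset.univ) =>
      (⟨p.parts.map (fun a => 2 * a),
        fun hi => by
          obtain ⟨a, ha, rfl⟩ := Multiset.mem_map.mp hi
          have := p.parts_pos ha; omega,
        by
          rw [Multiset.sum_map_mul_left, Multiset.map_id', p.parts_sum]⟩ :
            Nat.Partition (2 * n)))
    (fun (q : Nat.Partition (2 * n)) hq =>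
      (⟨q.parts.map (fun a => a / 2),
        fun hi => by
          obtain ⟨a, ha, rfl⟩ := Multiset.mem_map.mp hi
          have hpos := q.parts_pos ha
          obtain ⟨c, hc⟩ := (Finset.mem_filter.mp hq).2 a ha
          omega,
        by
          have hev : ∀ a ∈ q.parts, 2 * (a / 2) = a := fun a ha => by
            obtain ⟨c, hc⟩ := (Finset.mem_filter.mp hq).2 a ha
            omega
          have h2 : (q.parts.map (fun a => 2 * (a / 2))).sum = 2 * n := by
            rw [Multiset.map_congr rfl hev, Multiset.map_id', q.parts_sum]
          rw [Multiset.sum_map_mul_left] at h2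
          omega⟩ : Nat.Partition n))
    ?_ ?_ ?_ ?_
  · intro p _
    rw [Finset.mem_filter]
    refine ⟨Finset.mem_univ _, ?_⟩
    intro j hj
    obtain ⟨a, ha, rfl⟩ := Multiset.mem_map.mp hj
    exact ⟨a, by ring⟩
  · intro q hq
    exact Finset.mem_univ _
  · intro p _
    apply Nat.Partition.ext
    simp only [Multiset.map_map, Function.comp]
    rw [Multiset.map_congr rfl (fun a _ => show 2 * a / 2 = a by omega), Multiset.map_id']
  · intro q hq
    apply Nat.Partition.ext
    simp only [Multiset.map_map, Function.comp]
    have hev : ∀ a ∈ q.parts, 2 * (a / 2) = a := fun a ha => by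
      obtain ⟨c, hc⟩ := (Finset.mem_filter.mp hq).2 a ha
      omega
    rw [Multiset.map_congr rfl hev, Multiset.map_id']

-- chunk 6: main assembly

theorem two_mul_two_eq_zero : (2 : PowerSeries (ZMod 4)) * 2 = 0 := by
  have h1 : (2 : PowerSeries (ZMod 4)) * 2 = ((4 : ℕ) : PowerSeries (ZMod 4)) := by norm_num
  have h2 : ((4 : ℕ) : PowerSeries (ZMod 4)) = PowerSeries.C (R := ZMod 4) ((4 : ℕ) : ZMod 4) :=
    (map_natCast (PowerSeries.C (R := ZMod 4)) 4).symm
  rw [h1, h2, show ((4 : ℕ) : ZMod 4) = 0 from by decide, map_zero]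

theorem two_mul_coeff (f : PowerSeries (ZMod 4)) (n : ℕ) :
    coeff (R := (ZMod 4)) n (2 * f) = 2 * coeff (R := (ZMod 4)) n f := by
  rw [show (2 : PowerSeries (ZMod 4)) = PowerSeries.C (R := ZMod 4) 2 from
    (map_ofNat (PowerSeries.C (R := ZMod 4)) 2).symm, coeff_C_mul]

/-- Indicator of the positive perfect squares. -/
def sqInd : PowerSeries (ZMod 4) :=
  PowerSeries.mk fun j => if 0 < j ∧ IsSquare j then 1 else 0

theorem theta_eq :
    (PowerSeries.mk fun j => ((rQ 2 j : ℕ) : ZMod 4)) = 1 + 2 * sqInd := by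
  ext j
  rw [coeff_mk, map_add, coeff_one, two_mul_coeff, sqInd, coeff_mk, rQ_two]
  by_cases h0 : j = 0
  · subst h0; norm_num
  · rw [if_neg h0, if_neg h0]
    by_cases hsq : IsSquare j
    · rw [if_pos hsq, if_pos ⟨Nat.pos_of_ne_zero h0, hsq⟩]
      norm_num
    · rw [if_neg hsq, if_neg (fun hc => hsq hc.2)]
      norm_num

theorem coeff_D {B j : ℕ} (hj0 : 0 < j) (hjB : j ≤ B) :
    coeff (R := (ZMod 4)) j (∑ m ∈ range B, ind (ZMod 4) (m + 1) * X ^ (m + 1)) =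
      (j.divisors.card : ZMod 4) := by
  rw [map_sum]
  have hterm : ∀ m ∈ range B,
      coeff (R := (ZMod 4)) j (ind (ZMod 4) (m + 1) * X ^ (m + 1)) =
        if (m + 1) ∣ j then 1 else 0 := by
    intro m _
    rw [coeff_mul_X_pow']
    by_cases hle : m + 1 ≤ j
    · rw [if_pos hle, coeff_ind]
      have hiff : (m + 1) ∣ j - (m + 1) ↔ (m + 1) ∣ j := by
        constructor
        · intro hd
          have h : j - (m + 1) + (m + 1) = j := Nat.sub_add_cancel hle
          exact h ▸ Nat.dvd_add hd dvd_rfl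
        · intro hd; exact Nat.dvd_sub hd dvd_rfl
      rw [if_congr hiff rfl rfl]
    · rw [if_neg hle, if_neg (fun hd => hle (Nat.le_of_dvd hj0 hd))]
  rw [Finset.sum_congr rfl hterm, Finset.sum_boole]
  congr 1
  apply Finset.card_bij (fun m _ => m + 1)
  · intro m hm
    rw [Finset.mem_filter] at hm
    exact Nat.mem_divisors.mpr ⟨hm.2, by omega⟩
  · intro m1 h1 m2 h2 h
    omega
  · intro d hd
    have hdvd := (Nat.mem_divisors.mp hd).1
    have hdpos : 0 < d := Nat.pos_of_mem_divisors hd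
    have hdj : d ≤ j := Nat.le_of_dvd hj0 hdvd
    refine ⟨d - 1, Finset.mem_filter.mpr ⟨Finset.mem_range.mpr (by omega), ?_⟩, by omega⟩
    rw [show d - 1 + 1 = d by omega]
    exact hdvd

theorem abstract_identity {A : Type*} [CommRing A] {Θ P2 W Sq D : A}
    (h4 : (2 : A) * 2 = 0) (hθ : Θ = 1 + 2 * Sq) (hW : W ^ 2 * P2 = 1 + 2 * D) :
    Θ * (P2 * W) ^ 2 = P2 + (2 * (Sq + D)) * P2 := by
  rw [hθ]
  calc (1 + 2 * Sq) * (P2 * W) ^ 2 = ((1 + 2 * Sq) * (W ^ 2 * P2)) * P2 := by ring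
    _ = ((1 + 2 * Sq) * (1 + 2 * D)) * P2 := by rw [hW]
    _ = (1 + 2 * (Sq + D)) * P2 + ((2 * 2) * (Sq * D)) * P2 := by ring
    _ = P2 + (2 * (Sq + D)) * P2 := by rw [h4]; ring

theorem cphi_two_cast {t B : ℕ} (h : t + 1 ≤ B) :
    ((cphi 2 t : ℤ) : ZMod 4)
      = coeff (R := (ZMod 4)) t (∏ m ∈ range B, ind (ZMod 4) (2 * (m + 1))) := by
  classical
  have step1 : ((cphi 2 t : ℤ) : ZMod 4)
      = coeff (R := (ZMod 4)) t ((PowerSeries.mk fun j => ((rQ 2 j : ℕ) : ZMod 4))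
          * ∏ m ∈ range B, (ind (ZMod 4) (m + 1)) ^ 2) := by
    rw [coeff_mul, Finset.Nat.sum_antidiagonal_eq_sum_range_succ_mk, cphi]
    push_cast
    apply Finset.sum_congr rfl
    intro j hj
    rw [coeff_mk, pk_two_cast (show t - j + 1 ≤ B by
      rw [Finset.mem_range] at hj; omega)]
  rw [step1]
  have hfac : (∏ m ∈ range B, ind (ZMod 4) (m + 1))
      = (∏ m ∈ range B, ind (ZMod 4) (2 * (m + 1))) * ∏ m ∈ range B, (1 + X ^ (m + 1)) := by
    rw [← Finset.prod_mul_distrib]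
    exact Finset.prod_congr rfl fun m _ => ind_eq_ind_two_mul (Nat.succ_pos m)
  have hPW : (∏ m ∈ range B, (ind (ZMod 4) (m + 1)) ^ 2)
      = ((∏ m ∈ range B, ind (ZMod 4) (2 * (m + 1)))
          * ∏ m ∈ range B, (1 + X ^ (m + 1))) ^ 2 := by
    rw [Finset.prod_pow, hfac]
  have hWP2 : (∏ m ∈ range B, (1 + X ^ (m + 1))) ^ 2
        * (∏ m ∈ range B, ind (ZMod 4) (2 * (m + 1)))
      = 1 + 2 * ∑ m ∈ range B, ind (ZMod 4) (m + 1) * X ^ (m + 1) := by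
    rw [← Finset.prod_pow, ← Finset.prod_mul_distrib,
      Finset.prod_congr rfl (fun m (_ : m ∈ range B) => sq_one_add_mul_ind (Nat.succ_pos m))]
    exact prod_one_add_two_mul two_mul_two_eq_zero _ _
  rw [hPW, abstract_identity two_mul_two_eq_zero theta_eq hWP2, map_add]
  have hG : ∀ a, a ≤ t → coeff (R := (ZMod 4)) a
      (2 * (sqInd + ∑ m ∈ range B, ind (ZMod 4) (m + 1) * X ^ (m + 1))) = 0 := by
    intro a ha
    rw [two_mul_coeff, map_add]
    rcases Nat.eq_zero_or_pos a with rfl | ha0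
    · have h1 : coeff (R := (ZMod 4)) 0 sqInd = 0 := by
        rw [sqInd, coeff_mk, if_neg (by omega)]
      have h2 : coeff (R := (ZMod 4)) 0
          (∑ m ∈ range B, ind (ZMod 4) (m + 1) * X ^ (m + 1)) = 0 := by
        rw [map_sum]
        apply Finset.sum_eq_zero
        intro m _
        rw [coeff_mul_X_pow', if_neg (by omega)]
      rw [h1, h2]; norm_num
    · rw [coeff_D ha0 (by omega), sqInd, coeff_mk, if_congr (and_iff_right ha0) rfl rfl]
      obtain ⟨c, hc⟩ := even_indicator_add_card_divisors (Nat.pos_iff_ne_zero.mp ha0)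
      have hcast : ((if IsSquare a then 1 else 0 : ZMod 4)) + (a.divisors.card : ZMod 4)
          = (((if IsSquare a then 1 else 0) + a.divisors.card : ℕ) : ZMod 4) := by
        split_ifs <;> push_cast <;> ring
      rw [hcast, hc]
      calc (2 : ZMod 4) * ((c + c : ℕ) : ZMod 4)
          = ((2 * (c + c) : ℕ) : ZMod 4) := by push_cast; ring
        _ = ((4 * c : ℕ) : ZMod 4) := by rw [show 2 * (c + c) = 4 * c from by ring]
        _ = ((4 : ℕ) : ZMod 4) * (c : ZMod 4) := by push_cast; ring
        _ = 0 := by rw [show ((4 : ℕ) : ZMod 4) = 0 from by decide, zero_mul]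
  have hzero : coeff (R := (ZMod 4)) t
      ((2 * (sqInd + ∑ m ∈ range B, ind (ZMod 4) (m + 1) * X ^ (m + 1)))
        * ∏ m ∈ range B, ind (ZMod 4) (2 * (m + 1))) = 0 := by
    rw [coeff_mul]
    apply Finset.sum_eq_zero
    rintro ⟨a, b⟩ hab
    rw [Finset.HasAntidiagonal.mem_antidiagonal] at hab
    rw [hG a (by omega), zero_mul]
  rw [hzero, add_zero]

end

end CPhiAux

/-- `cφ₂(2n) ≡ p(n) (mod 4)` and `cφ₂(2n+1) ≡ 0 (mod 4)`, where `p` is the ordinary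
partition function. -/
theorem cphi_two_mod_four (n : ℕ) :
    (4 : ℤ) ∣ cphi 2 (2 * n) - (Fintype.card (Nat.Partition n) : ℤ) ∧
    (4 : ℤ) ∣ cphi 2 (2 * n + 1) := by
  classical
  constructor
  · rw [show (4:ℤ) = ((4:ℕ):ℤ) from by norm_num, ← ZMod.intCast_zmod_eq_zero_iff_dvd]
    push_cast
    rw [CPhiAux.cphi_two_cast (B := 2 * n + 2) (by omega),
      CPhiAux.coeff_P2_eq_card (2 * n) (2 * n + 2) (by omega),
      CPhiAux.card_even_partitions_even]
    ring
  · rw [show (4:ℤ) = ((4:ℕ):ℤ) from by norm_num, ← ZMod.intCast_zmod_eq_zero_iff_dvd]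
    rw [CPhiAux.cphi_two_cast (B := 2 * n + 2) (by omega),
      CPhiAux.coeff_P2_eq_card (2 * n + 1) (2 * n + 2) (by omega)]
    exact CPhiAux.card_even_partitions_odd _ (by omega)
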